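/- Let A ∈ ℝ^{p×p} be symmetric positive semidefinite, S ∈ ℝ^p, β ∈ ℝ^p with support T = {j : β_j ≠ 0} of cardinality s, λ > 0, and let β̂ be any minimizer of f(b) = (1/2)bᵀAb − bᵀS + λ‖b‖₁ over ℝ^p. If λ ≥ 2‖S − Aβ‖_∞, then h = β̂ − β satisfies: (i) the cone condition ‖h_{T^c}‖₁ ≤ 3‖h_T‖₁; (ii) hᵀAh ≤ 3λ√s·‖h‖₂. If in addition there is κ > 0 with κ‖v‖₂² ≤ vᵀAv for every v ∈ ℝ^p satisfying ‖v_{T^c}‖₁ ≤ 3‖v_T‖₁, then ‖h‖₂ ≤ 3λ√s/κ, ‖h‖₁ ≤ 12λs/κ, and hᵀAh ≤ 9λ²s/κ. -/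

import Mathlib

open MeasureTheory ProbabilityTheory Filter Matrix Real Topology
open scoped ENNReal NNReal

noncomputable section

namespace ProxyData

def l0 {p : ℕ} (v : Fin p → ℝ) : ℕ := (Function.support v).ncard

def l1 {p : ℕ} (v : Fin p → ℝ) : ℝ := ∑ i, |v i|

def l2sq {p : ℕ} (v : Fin p → ℝ) : ℝ := ∑ i, (v i) ^ 2

def linf {p : ℕ} (v : Fin p → ℝ) : ℝ := ⨆ i, |v i|

def gaussianVec {p : ℕ} (S : Matrix (Fin p) (Fin p) ℝ) (hS : S.PosSemidef) :
    Measure (Fin p → ℝ) :=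
  (Measure.pi fun _ : Fin p => gaussianReal 0 1).map fun z =>
    ((hS.1.eigenvectorUnitary : Matrix (Fin p) (Fin p) ℝ) *
      diagonal ((↑) ∘ (Real.sqrt ∘ hS.1.eigenvalues)) *
      (star (hS.1.eigenvectorUnitary : Matrix (Fin p) (Fin p) ℝ))) *ᵥ z

def EigBounds {p : ℕ} (S : Matrix (Fin p) (Fin p) ℝ) (C₁ : ℝ) : Prop :=
  S.IsSymm ∧ ∀ v : Fin p → ℝ, C₁⁻¹ * l2sq v ≤ v ⬝ᵥ S *ᵥ v ∧ v ⬝ᵥ S *ᵥ v ≤ C₁ * l2sq v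

def SubGaussianLaw (ν : Measure ℝ) (K : ℝ) : Prop :=
  ∀ l : ℕ, 1 ≤ l → (∫ x, |x| ^ l ∂ν) ^ ((l : ℝ)⁻¹) ≤ K * Real.sqrt l

def NoiseLaw (ν : Measure ℝ) (σ K : ℝ) : Prop :=
  IsProbabilityMeasure ν ∧ Integrable (fun x => x) ν ∧ Integrable (fun x => x ^ 2) ν ∧
    (∫ x, x ∂ν) = 0 ∧ (∫ x, x ^ 2 ∂ν) = σ ^ 2 ∧ SubGaussianLaw ν K

abbrev SampleSpace (p n m : ℕ) :=
  (Fin n → Fin p → ℝ) × (Fin n → ℝ) × (Fin m → Fin p → ℝ)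

def modelMeasure {p : ℕ} (n m : ℕ) (S : Matrix (Fin p) (Fin p) ℝ) (hS : S.PosSemidef)
    (ν : Measure ℝ) : Measure (SampleSpace p n m) :=
  (Measure.pi fun _ : Fin n => gaussianVec S hS).prod
    ((Measure.pi fun _ : Fin n => ν).prod (Measure.pi fun _ : Fin m => gaussianVec S hS))

def yVal {p n m : ℕ} (β : Fin p → ℝ) (ω : SampleSpace p n m) (i : Fin n) : ℝ :=
  (∑ j, ω.1 i j * β j) + ω.2.1 i

def Shat {p n m : ℕ} (β : Fin p → ℝ) (ω : SampleSpace p n m) : Fin p → ℝ :=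
  fun j => (∑ i, ω.1 i j * yVal β ω i) / n

def SigTilde {p n m : ℕ} (ω : SampleSpace p n m) : Matrix (Fin p) (Fin p) ℝ :=
  fun j k => (∑ i, ω.2.2 i j * ω.2.2 i k) / m

def gammaNN {p : ℕ} (S : Matrix (Fin p) (Fin p) ℝ) (β : Fin p → ℝ) (σ : ℝ) (n m : ℕ) : ℝ :=
  σ ^ 2 + (β ⬝ᵥ S *ᵥ β) * ((n : ℝ) / m + 1)

def lassoObj {p : ℕ} (A : Matrix (Fin p) (Fin p) ℝ) (s : Fin p → ℝ) (lam : ℝ)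
    (b : Fin p → ℝ) : ℝ :=
  (1 / 2) * (b ⬝ᵥ A *ᵥ b) - b ⬝ᵥ s + lam * l1 b

def IsLassoSol {p : ℕ} (A : Matrix (Fin p) (Fin p) ℝ) (s : Fin p → ℝ) (lam : ℝ)
    (bhat : Fin p → ℝ) : Prop :=
  ∀ b, lassoObj A s lam bhat ≤ lassoObj A s lam b

def DantzigFeas {p : ℕ} (A : Matrix (Fin p) (Fin p) ℝ) (t : Fin p → ℝ) (lam : ℝ)
    (w : Fin p → ℝ) : Prop :=
  linf (fun i => (A *ᵥ w) i - t i) ≤ lam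

def IsDantzigSol {p : ℕ} (A : Matrix (Fin p) (Fin p) ℝ) (t : Fin p → ℝ) (lam : ℝ)
    (w : Fin p → ℝ) : Prop :=
  DantzigFeas A t lam w ∧ ∀ w', DantzigFeas A t lam w' → l1 w ≤ l1 w'

def stdNormalCDF (t : ℝ) : ℝ := (gaussianReal 0 1 (Set.Iic t)).toReal

def BigOP {Ωs : ℕ → Type*} [∀ k, MeasurableSpace (Ωs k)] (μ : ∀ k, Measure (Ωs k))
    (X : ∀ k, Ωs k → ℝ) (r : ℕ → ℝ) : Prop :=
  ∀ ε : ℝ, 0 < ε → ∃ C : ℝ, 0 < C ∧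
    ∀ᶠ k in atTop, (μ k {ω | C * r k < |X k ω|}).toReal ≤ ε

def TendstoStdNormal {Ωs : ℕ → Type*} [∀ k, MeasurableSpace (Ωs k)] (μ : ∀ k, Measure (Ωs k))
    (X : ∀ k, Ωs k → ℝ) : Prop :=
  ∀ t : ℝ, Tendsto (fun k => (μ k {ω | X k ω ≤ t}).toReal) atTop (𝓝 (stdNormalCDF t))

def omegaCol {p : ℕ} (S : Matrix (Fin p) (Fin p) ℝ) (j : Fin p) : Fin p → ℝ := fun i => S⁻¹ i j

def zstat {p n m : ℕ} (S : Matrix (Fin p) (Fin p) ℝ) (β : Fin p → ℝ) (j : Fin p)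
    (ω : SampleSpace p n m) : ℝ :=
  omegaCol S j ⬝ᵥ (fun i => Shat β ω i - (S *ᵥ β) i)
    + omegaCol S j ⬝ᵥ ((S - SigTilde ω) *ᵥ β)

def Vts {p : ℕ} (S : Matrix (Fin p) (Fin p) ℝ) (β : Fin p → ℝ) (σ : ℝ) (n m : ℕ)
    (j : Fin p) : ℝ :=
  S⁻¹ j j * gammaNN S β σ n m / n + (β j) ^ 2 / n + (β j) ^ 2 / m


section OracleAux

variable {p : ℕ}

lemma l1_nonneg' (v : Fin p → ℝ) : 0 ≤ l1 v :=
  Finset.sum_nonneg fun _ _ => abs_nonneg _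

lemma l2sq_nonneg' (v : Fin p → ℝ) : 0 ≤ l2sq v :=
  Finset.sum_nonneg fun _ _ => sq_nonneg _

lemma l1_split' (T : Set (Fin p)) (v : Fin p → ℝ) :
    l1 v = l1 (T.indicator v) + l1 (Tᶜ.indicator v) := by
  classical
  unfold l1
  rw [← Finset.sum_add_distrib]
  refine Finset.sum_congr rfl fun i _ => ?_
  by_cases hi : i ∈ T
  · rw [Set.indicator_of_mem hi, Set.indicator_of_notMem (by simpa using hi : i ∉ Tᶜ)]
    simp
  · rw [Set.indicator_of_notMem hi, Set.indicator_of_mem (by simpa using hi : i ∈ Tᶜ)]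
    simp

lemma dot_le_l1_linf' (v w : Fin p → ℝ) : v ⬝ᵥ w ≤ l1 v * linf w := by
  unfold l1 linf
  rw [Finset.sum_mul]
  refine Finset.sum_le_sum fun i _ => ?_
  calc v i * w i ≤ |v i * w i| := le_abs_self _
    _ = |v i| * |w i| := abs_mul _ _
    _ ≤ |v i| * ⨆ j, |w j| :=
        mul_le_mul_of_nonneg_left
          (le_ciSup (f := fun j => |w j|) (Set.Finite.bddAbove (Set.finite_range _)) i) (abs_nonneg _)

lemma l1_ind_le_sqrt' (T : Set (Fin p)) (v : Fin p → ℝ) :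
    l1 (T.indicator v) ≤ Real.sqrt (T.ncard) * Real.sqrt (l2sq v) := by
  classical
  have hfin : T.Finite := Set.toFinite T
  set s : Finset (Fin p) := hfin.toFinset with hs
  have hmem : ∀ i, i ∈ s ↔ i ∈ T := fun i => hfin.mem_toFinset
  have h1 : l1 (T.indicator v) = ∑ i ∈ s, |v i| := by
    unfold l1
    rw [← Finset.sum_subset (Finset.subset_univ s)
      (fun x _ hx => by
        rw [Set.indicator_of_notMem (by simpa using (hmem x).not.mp hx)]; simp)]
    exact Finset.sum_congr rfl fun i hi => by
      rw [Set.indicator_of_mem ((hmem i).mp hi)]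
  have h2 : (∑ i ∈ s, |v i|) ^ 2 ≤ (s.card : ℝ) * ∑ i ∈ s, (v i) ^ 2 := by
    have := Finset.sum_mul_sq_le_sq_mul_sq s (fun _ => (1 : ℝ)) (fun i => |v i|)
    simpa [sq_abs] using this
  have h3 : ∑ i ∈ s, (v i) ^ 2 ≤ l2sq v :=
    Finset.sum_le_sum_of_subset_of_nonneg (Finset.subset_univ s)
      (fun _ _ _ => sq_nonneg _)
  have hcard : (s.card : ℝ) = (T.ncard : ℝ) := by
    rw [Set.ncard_eq_toFinset_card T hfin]
  have h4 : (l1 (T.indicator v)) ^ 2 ≤ (T.ncard : ℝ) * l2sq v := by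
    rw [h1, ← hcard]
    calc (∑ i ∈ s, |v i|) ^ 2 ≤ (s.card : ℝ) * ∑ i ∈ s, (v i) ^ 2 := h2
      _ ≤ (s.card : ℝ) * l2sq v :=
          mul_le_mul_of_nonneg_left h3 (Nat.cast_nonneg _)
  calc l1 (T.indicator v) = Real.sqrt ((l1 (T.indicator v)) ^ 2) :=
        (Real.sqrt_sq (l1_nonneg' _)).symm
    _ ≤ Real.sqrt ((T.ncard : ℝ) * l2sq v) := Real.sqrt_le_sqrt h4
    _ = Real.sqrt (T.ncard) * Real.sqrt (l2sq v) :=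
        Real.sqrt_mul (Nat.cast_nonneg _) _

lemma dot_mulVec_symm' (A : Matrix (Fin p) (Fin p) ℝ) (hA : A.IsHermitian)
    (v w : Fin p → ℝ) : v ⬝ᵥ A *ᵥ w = w ⬝ᵥ A *ᵥ v := by
  have hsym : ∀ i j, A i j = A j i := fun i j => by
    have := congrFun (congrFun hA j) i
    simpa [Matrix.conjTranspose_apply] using this
  simp only [dotProduct, Matrix.mulVec, Finset.mul_sum]
  rw [Finset.sum_comm]
  exact Finset.sum_congr rfl fun i _ => Finset.sum_congr rfl fun j _ => by
    rw [hsym j i]; ring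

end OracleAux

set_option maxHeartbeats 1000000 in
/-- the deterministic oracle inequality for the (two-sample) Lasso.
If `λ ≥ 2‖S − Aβ‖_∞` and `β̂` minimizes `(1/2)bᵀAb − bᵀS + λ‖b‖₁`, then `h = β̂ − β`
satisfies the cone condition, `hᵀAh ≤ 3λ√s‖h‖₂`, and under a restricted eigenvalue
condition also `‖h‖₂ ≤ 3λ√s/κ`, `‖h‖₁ ≤ 12λs/κ` and `hᵀAh ≤ 9λ²s/κ`. -/
theorem statement_14 {p : ℕ} (A : Matrix (Fin p) (Fin p) ℝ) (hA : A.PosSemidef)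
    (S β βhat : Fin p → ℝ) (lam : ℝ) (hlam : 0 < lam)
    (T : Set (Fin p)) (hT : T = Function.support β)
    (hmin : ∀ b, lassoObj A S lam βhat ≤ lassoObj A S lam b)
    (hdual : 2 * linf (fun i => S i - (A *ᵥ β) i) ≤ lam) :
    -- (i) cone condition
    (l1 (Tᶜ.indicator fun i => βhat i - β i) ≤ 3 * l1 (T.indicator fun i => βhat i - β i)) ∧
    -- (ii) basic inequality
    ((fun i => βhat i - β i) ⬝ᵥ A *ᵥ (fun i => βhat i - β i)
        ≤ 3 * lam * Real.sqrt (T.ncard) * Real.sqrt (l2sq fun i => βhat i - β i)) ∧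
    -- (iii) bounds under the restricted eigenvalue condition
    (∀ κ : ℝ, 0 < κ →
      (∀ v : Fin p → ℝ, l1 (Tᶜ.indicator v) ≤ 3 * l1 (T.indicator v) →
        κ * l2sq v ≤ v ⬝ᵥ A *ᵥ v) →
      Real.sqrt (l2sq fun i => βhat i - β i) ≤ 3 * lam * Real.sqrt (T.ncard) / κ ∧
      l1 (fun i => βhat i - β i) ≤ 12 * lam * T.ncard / κ ∧
      (fun i => βhat i - β i) ⬝ᵥ A *ᵥ (fun i => βhat i - β i) ≤ 9 * lam ^ 2 * T.ncard / κ) := by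
  classical
  set h : Fin p → ℝ := fun i => βhat i - β i with hh
  set Q : ℝ := h ⬝ᵥ A *ᵥ h with hQdef
  have hQ0 : 0 ≤ Q := by simpa using hA.dotProduct_mulVec_nonneg h
  set L1T : ℝ := l1 (T.indicator h) with hL1T
  set L1Tc : ℝ := l1 (Tᶜ.indicator h) with hL1Tc
  have hL1T0 : 0 ≤ L1T := l1_nonneg' _
  have hL1Tc0 : 0 ≤ L1Tc := l1_nonneg' _
  have hsplit : l1 h = L1T + L1Tc := l1_split' T h
  -- rewrite the minimality at β
  have hbhat : βhat = β + h := by funext i; simp [hh]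
  have hexpand : βhat ⬝ᵥ A *ᵥ βhat = β ⬝ᵥ A *ᵥ β + 2 * (h ⬝ᵥ A *ᵥ β) + Q := by
    rw [hbhat, Matrix.mulVec_add, dotProduct_add, add_dotProduct,
      add_dotProduct, dot_mulVec_symm' A hA.1 β h, hQdef]
    ring
  have hdotS : βhat ⬝ᵥ S = β ⬝ᵥ S + h ⬝ᵥ S := by
    rw [hbhat, add_dotProduct]
  have hobj := hmin β
  unfold lassoObj at hobj
  rw [hexpand, hdotS] at hobj
  -- bound the dual term
  have hdualterm : h ⬝ᵥ S - h ⬝ᵥ A *ᵥ β ≤ (lam / 2) * l1 h := by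
    have e : h ⬝ᵥ (fun i => S i - (A *ᵥ β) i) = h ⬝ᵥ S - h ⬝ᵥ A *ᵥ β := by
      simp [dotProduct, mul_sub, Finset.sum_sub_distrib]
    have hb := dot_le_l1_linf' h (fun i => S i - (A *ᵥ β) i)
    have hlinf : linf (fun i => S i - (A *ᵥ β) i) ≤ lam / 2 := by linarith
    have := mul_le_mul_of_nonneg_left hlinf (l1_nonneg' h)
    rw [e] at hb
    nlinarith [l1_nonneg' h]
  -- bound the l1 difference
  have hl1diff : l1 β - l1 βhat ≤ L1T - L1Tc := by
    have hpt : ∀ i, |β i| - |βhat i| ≤ |T.indicator h i| - |Tᶜ.indicator h i| := by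
      intro i
      by_cases hi : i ∈ T
      · rw [Set.indicator_of_mem hi, Set.indicator_of_notMem (by simpa using hi : i ∉ Tᶜ)]
        have h1 : |β i| - |βhat i| ≤ |β i - βhat i| := abs_sub_abs_le_abs_sub _ _
        have h2 : |β i - βhat i| = |h i| := by rw [hh]; rw [abs_sub_comm]
        simp only [abs_zero, sub_zero]
        linarith
      · have hβ0 : β i = 0 := by
          rw [hT] at hi
          simpa [Function.mem_support] using hi
        rw [Set.indicator_of_notMem hi, Set.indicator_of_mem (by simpa using hi : i ∈ Tᶜ)]
        have : h i = βhat i := by rw [hh]; simp [hβ0]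
        simp [hβ0, this]
    have : l1 β - l1 βhat ≤ ∑ i, (|T.indicator h i| - |Tᶜ.indicator h i|) := by
      unfold l1
      rw [← Finset.sum_sub_distrib]
      exact Finset.sum_le_sum fun i _ => hpt i
    rw [Finset.sum_sub_distrib] at this
    exact this
  -- master inequality
  have master : Q + lam * L1Tc ≤ 3 * lam * L1T := by nlinarith [hsplit]
  -- (i) cone condition
  have cone : L1Tc ≤ 3 * L1T := by
    have h1 : lam * L1Tc ≤ lam * (3 * L1T) := by nlinarith
    exact le_of_mul_le_mul_left h1 hlam
  -- (ii)
  have hCS : L1T ≤ Real.sqrt (T.ncard) * Real.sqrt (l2sq h) := l1_ind_le_sqrt' T h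
  have hQ3 : Q ≤ 3 * lam * L1T := by nlinarith
  have basic : Q ≤ 3 * lam * Real.sqrt (T.ncard) * Real.sqrt (l2sq h) := by
    have := mul_le_mul_of_nonneg_left hCS (by positivity : (0:ℝ) ≤ 3 * lam)
    calc Q ≤ 3 * lam * L1T := hQ3
      _ ≤ 3 * lam * (Real.sqrt (T.ncard) * Real.sqrt (l2sq h)) := this
      _ = 3 * lam * Real.sqrt (T.ncard) * Real.sqrt (l2sq h) := by ring
  refine ⟨cone, basic, ?_⟩
  -- (iii)
  intro κ hκ hRE
  set R : ℝ := Real.sqrt (l2sq h) with hR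
  have hR0 : 0 ≤ R := Real.sqrt_nonneg _
  have hRsq : R ^ 2 = l2sq h := Real.sq_sqrt (l2sq_nonneg' h)
  have hREh : κ * l2sq h ≤ Q := hRE h cone
  set s : ℝ := Real.sqrt (T.ncard) with hsdef
  have hs0 : 0 ≤ s := Real.sqrt_nonneg _
  have hss : s * s = (T.ncard : ℝ) := Real.mul_self_sqrt (Nat.cast_nonneg _)
  have g1 : R ≤ 3 * lam * s / κ := by
    rcases eq_or_lt_of_le hR0 with h0 | hpos
    · rw [← h0]; positivity
    · have hchain : κ * R ^ 2 ≤ 3 * lam * s * R := by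
        calc κ * R ^ 2 = κ * l2sq h := by rw [hRsq]
          _ ≤ Q := hREh
          _ ≤ 3 * lam * s * R := basic
      have hx : κ * R ≤ 3 * lam * s := by
        have : κ * R * R ≤ 3 * lam * s * R := by nlinarith
        exact le_of_mul_le_mul_right this hpos
      rw [le_div_iff₀ hκ]
      linarith [hx]
  have g2 : l1 h ≤ 12 * lam * (T.ncard : ℝ) / κ := by
    have h4 : l1 h ≤ 4 * L1T := by linarith [hsplit, cone]
    have h5 : L1T ≤ s * R := hCS
    have h6 : s * R ≤ s * (3 * lam * s / κ) :=
      mul_le_mul_of_nonneg_left g1 hs0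
    have h7 : s * (3 * lam * s / κ) = 3 * lam * (s * s) / κ := by ring
    rw [h7, hss] at h6
    calc l1 h ≤ 4 * L1T := h4
      _ ≤ 4 * (s * R) := by linarith
      _ ≤ 4 * (3 * lam * (T.ncard : ℝ) / κ) := by linarith
      _ = 12 * lam * (T.ncard : ℝ) / κ := by ring
  have g3 : Q ≤ 9 * lam ^ 2 * (T.ncard : ℝ) / κ := by
    have h6 : 3 * lam * s * R ≤ 3 * lam * s * (3 * lam * s / κ) :=
      mul_le_mul_of_nonneg_left g1 (by positivity)
    have h7 : 3 * lam * s * (3 * lam * s / κ) = 9 * lam ^ 2 * (s * s) / κ := by ring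
    rw [h7, hss] at h6
    exact le_trans basic h6
  exact ⟨g1, g2, g3⟩

end ProxyData
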